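/- Let f be a bijective holomorphic map from Ê₂ onto itself with holomorphic inverse (Ê₂ being regarded as an open subset of ℂ² via the coordinates Z₀ = [[z₁,z₂],[z₂,z₁]] ↦ (z₁,z₂)) such that f(0) = 0. Then there exists a unitary 2×2 complex matrix U with qU = Uq or qU = −Uq such that f(Z₀) = ᵗU Z₀ U for all Z₀ ∈ Ê₂. -/

import Mathlib

open Matrix Complex

noncomputable section

abbrev Mat2 : Type := Matrix (Fin 2) (Fin 2) ℂ
abbrev Mat2R : Type := Matrix (Fin 2) (Fin 2) ℝ
abbrev Mat4 : Type := Matrix (Fin 2 ⊕ Fin 2) (Fin 2 ⊕ Fin 2) ℝ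

/-- `q = [[0,1],[1,0]]`. -/
def qR : Mat2R := !![0, 1; 1, 0]

/-- `J = [[0, I₂],[−I₂, 0]]` (4×4). -/
def Jmat : Mat4 := Matrix.fromBlocks 0 1 (-1) 0

/-- `Q = diag(q, q)` (4×4). -/
def Qmat : Mat4 := Matrix.fromBlocks qR 0 0 qR

/-- `Ω₂ = Sp(4,ℝ) = {M : ᵗM J M = J}`. -/
def Omega2 : Set Mat4 := {M | Mᵀ * Jmat * M = Jmat}

/-- The new Siegel upper half space `Ĥ₂`: bi-symmetric `Z = [[τ,z],[z,τ]]` with `Im τ > |Im z|`. -/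
def Hhat : Set Mat2 :=
  {Z | Z 1 1 = Z 0 0 ∧ Z 1 0 = Z 0 1 ∧ |(Z 0 1).im| < (Z 0 0).im}

/-- The action `M<Z> = (AZ+B)(CZ+D)⁻¹` of a real 4×4 matrix in 2×2 blocks on `Z ∈ ℂ^{2×2}`. -/
def act (M : Mat4) (Z : Mat2) : Mat2 :=
  (M.toBlocks₁₁.map Complex.ofReal * Z + M.toBlocks₁₂.map Complex.ofReal) *
    (M.toBlocks₂₁.map Complex.ofReal * Z + M.toBlocks₂₂.map Complex.ofReal)⁻¹

/-- `Ω̂₂ = {M ∈ Ω₂ : M<Z> ∈ Ĥ₂ for all Z ∈ Ĥ₂}`. -/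
def OmegaHat : Set Mat4 := {M | M ∈ Omega2 ∧ ∀ Z ∈ Hhat, act M Z ∈ Hhat}

open ComplexOrder

/-- `q` as a complex matrix. -/
def qC : Mat2 := !![0, 1; 1, 0]

/-- Entrywise complex conjugation of a matrix. -/
def conjM (Z : Mat2) : Mat2 := Z.map (starRingEnd ℂ)

/-- The bounded domain `Ê₂ = {Z₀ : qZ₀ = Z₀q, I − Z₀·conj(Z₀) positive definite}`. -/
def Ehat : Set Mat2 := {Z | qC * Z = Z * qC ∧ (1 - Z * conjM Z).PosDef}

/-- The bi-symmetric matrix `[[z₁,z₂],[z₂,z₁]]` associated to `(z₁, z₂) ∈ ℂ²`. -/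
def mk2 (p : ℂ × ℂ) : Mat2 := !![p.1, p.2; p.2, p.1]

/-- `Ê₂` regarded as a subset of `ℂ²`. -/
def EhatP : Set (ℂ × ℂ) := {p | mk2 p ∈ Ehat}

open Metric Set Function
private def B2 : Set (ℂ × ℂ) := Metric.ball 0 1

lemma mem_B2 {w : ℂ × ℂ} : w ∈ B2 ↔ max ‖w.1‖ ‖w.2‖ < 1 := by
  simp [B2, mem_ball_zero_iff, Prod.norm_def]

lemma schwarz2 {F : ℂ × ℂ → ℂ × ℂ} (hd : DifferentiableOn ℂ F B2) (hm : Set.MapsTo F B2 B2)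
    (h0 : F 0 = 0) {w : ℂ × ℂ} (hw : w ∈ B2) : ‖F w‖ ≤ ‖w‖ := by
  rcases eq_or_ne w 0 with rfl | hne
  · simp [h0]
  set m : ℝ := ‖w‖ with hm'
  have hm0 : 0 < m := norm_pos_iff.2 hne
  set ψ : ℂ → ℂ × ℂ := fun z => (z / (m:ℂ)) • w with hψ
  have hψd : Differentiable ℂ ψ := (differentiable_id.div_const _).smul_const w
  have hψm : Set.MapsTo ψ (ball 0 1) B2 := by
    intro z hz
    simp only [mem_ball_zero_iff] at hz
    have : ‖ψ z‖ = ‖z‖ := by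
      rw [hψ]
      simp only [norm_smul, norm_div, Complex.norm_real, Real.norm_of_nonneg hm0.le]
      field_simp
      rw [hm']
    simpa [B2, mem_ball_zero_iff, this] using hz
  have hcomp : DifferentiableOn ℂ (F ∘ ψ) (ball 0 1) :=
    hd.comp hψd.differentiableOn hψm
  have h00 : (F ∘ ψ) 0 = 0 := by simp [hψ, h0]
  have hmaps : Set.MapsTo (F ∘ ψ) (ball 0 1) (ball ((F ∘ ψ) 0) 1) := by
    rw [h00]; exact fun z hz => hm (hψm hz)
  have hzmem : (m : ℂ) ∈ ball (0:ℂ) 1 := by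
    simp only [mem_ball_zero_iff, Complex.norm_real, Real.norm_of_nonneg hm0.le]
    simpa [B2, mem_ball_zero_iff] using hw
  have := Complex.dist_le_div_mul_dist_of_mapsTo_ball hcomp (hmaps.mono_right ball_subset_closedBall) hzmem
  have hψm' : ψ (m:ℂ) = w := by
    rw [hψ]; simp only []
    rw [div_self (by exact_mod_cast hm0.ne')]
    exact one_smul _ _
  simp only [Function.comp, hψm'] at this
  have hψ0 : ψ 0 = 0 := by rw [hψ]; simp
  rw [hψ0, h0] at this
  simpa [dist_zero_right, Complex.norm_real, Real.norm_of_nonneg hm0.le, abs_of_pos hm0] using this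

private def Us : Set (ℂ × ℂ) := {w | ‖w.2‖ < ‖w.1‖ ∧ ‖w.1‖ < 1}

lemma isOpen_Us : IsOpen Us :=
  (isOpen_lt (continuous_norm.comp continuous_snd) (continuous_norm.comp continuous_fst)).inter
    (isOpen_lt (continuous_norm.comp continuous_fst) continuous_const)

lemma Us_subset_B2 : Us ⊆ B2 := by
  intro w hw
  exact mem_B2.2 (max_lt hw.2 (hw.1.trans hw.2))

lemma isPreconnected_Us : IsPreconnected Us := by
  have hS : IsPreconnected ((Set.Ioo (0:ℝ) 1) ×ˢ ((Set.univ : Set ℝ) ×ˢ Metric.ball (0:ℂ) 1)) :=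
    isPreconnected_Ioo.prod (isPreconnected_univ.prod (convex_ball (0:ℂ) 1).isPreconnected)
  set gmap : ℝ × ℝ × ℂ → ℂ × ℂ := fun t =>
    ((t.1:ℂ) * Complex.exp (t.2.1 * Complex.I), (t.1:ℂ) * Complex.exp (t.2.1 * Complex.I) * t.2.2)
    with hg
  have hgc : Continuous gmap := by
    rw [hg]; fun_prop
  have himg : gmap '' ((Set.Ioo (0:ℝ) 1) ×ˢ ((Set.univ : Set ℝ) ×ˢ Metric.ball (0:ℂ) 1)) = Us := by
    ext w
    constructor
    · rintro ⟨⟨r, θ, b⟩, ⟨⟨hr0, hr1⟩, -, hb⟩, rfl⟩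
      have he : ‖(r:ℂ) * Complex.exp (θ * Complex.I)‖ = r := by
        rw [norm_mul, Complex.norm_real, Complex.norm_exp_ofReal_mul_I,
          Real.norm_of_nonneg hr0.le, mul_one]
      simp only [mem_ball_zero_iff] at hb
      constructor
      · show ‖(r:ℂ) * Complex.exp (θ * Complex.I) * b‖ < ‖(r:ℂ) * Complex.exp (θ * Complex.I)‖
        rw [norm_mul, he]
        calc r * ‖b‖ < r * 1 := mul_lt_mul_of_pos_left hb hr0
          _ = r := mul_one r
      · show ‖(r:ℂ) * Complex.exp (θ * Complex.I)‖ < 1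
        rw [he]; exact hr1
    · rintro ⟨h1, h2⟩
      have hw1 : w.1 ≠ 0 := by
        intro h; rw [h] at h1; simp at h1
        exact absurd h1 (norm_nonneg _).not_gt
      refine ⟨(‖w.1‖, Complex.arg w.1, w.2 / w.1), ⟨⟨?_, ?_⟩, trivial, ?_⟩, ?_⟩
      · exact norm_pos_iff.mpr hw1
      · simpa using h2
      · simp only [mem_ball_zero_iff, norm_div]
        rw [div_lt_one (by simpa using (norm_pos_iff.mpr hw1))]
        exact h1
      · simp only [hg, Complex.norm_mul_exp_arg_mul_I]
        exact Prod.ext rfl (by field_simp)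
  rw [← himg]
  exact hS.image gmap hgc.continuousOn

lemma norm_half : ‖((2:ℂ)⁻¹, (0:ℂ))‖ = 2⁻¹ := by
  simp [Prod.norm_def]

lemma coord_linear {F : ℂ × ℂ → ℂ × ℂ} (hd : DifferentiableOn ℂ F B2)
    (hn : ∀ w ∈ B2, ‖F w‖ = ‖w‖)
    (hstar : ‖(F ((2:ℂ)⁻¹, 0)).1‖ = 2⁻¹) :
    ∃ γ : ℂ, ‖γ‖ = 1 ∧ ∀ w ∈ B2, (F w).1 = γ * w.1 := by
  -- the quotient h is differentiable on Us
  have hw1ne : ∀ w ∈ Us, w.1 ≠ (0:ℂ) := by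
    intro w hw h
    have h1 := hw.1
    rw [h] at h1
    simp at h1
    exact absurd h1 (norm_nonneg _).not_gt
  have hd1 : DifferentiableOn ℂ (fun w => (F w).1) B2 := hd.fst
  set h : ℂ × ℂ → ℂ := fun w => (F w).1 / w.1 with hh
  have hdh : DifferentiableOn ℂ h Us := by
    intro w hw
    have hFd : DifferentiableAt ℂ F w :=
      hd.differentiableAt (Metric.isOpen_ball.mem_nhds (Us_subset_B2 hw))
    have h1 : DifferentiableAt ℂ (fun w : ℂ × ℂ => (F w).1) w := hFd.fst
    have h2 : DifferentiableAt ℂ (fun w : ℂ × ℂ => w.1) w := differentiableAt_fst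
    have h3 : DifferentiableAt ℂ (fun w : ℂ × ℂ => (F w).1 * (w.1)⁻¹) w :=
      h1.mul (h2.inv (hw1ne w hw))
    have h4 : h = fun w : ℂ × ℂ => (F w).1 * (w.1)⁻¹ := by
      funext v; rw [hh]; simp [div_eq_mul_inv]
    rw [h4]
    exact h3.differentiableWithinAt
  -- upper bound on ‖h‖
  have hb : ∀ w ∈ Us, ‖h w‖ ≤ 1 := by
    intro w hw
    have h1 : ‖(F w).1‖ ≤ ‖w.1‖ := by
      calc ‖(F w).1‖ ≤ ‖F w‖ := by rw [Prod.norm_def]; exact le_max_left _ _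
        _ = ‖w‖ := hn w (Us_subset_B2 hw)
        _ = ‖w.1‖ := by rw [Prod.norm_def]; exact max_eq_left hw.1.le
    rw [hh]
    simp only [norm_div]
    exact div_le_one_of_le₀ h1 (norm_nonneg _)
  have hzs : ((2:ℂ)⁻¹, (0:ℂ)) ∈ Us := by
    constructor <;> norm_num
  have hhz : ‖h ((2:ℂ)⁻¹, 0)‖ = 1 := by
    simp only [hh]
    rw [norm_div, hstar]
    norm_num
  have hmax : IsMaxOn (norm ∘ h) Us ((2:ℂ)⁻¹, (0:ℂ)) := by
    intro w hw
    simp only [Set.mem_setOf_eq, Function.comp_apply]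
    rw [hhz]
    exact hb w hw
  have heq := Complex.eqOn_of_isPreconnected_of_isMaxOn_norm isPreconnected_Us isOpen_Us hdh
    hzs hmax
  set γ : ℂ := h ((2:ℂ)⁻¹, 0) with hγ
  have hγ1 : ‖γ‖ = 1 := hhz
  have hUs : ∀ w ∈ Us, (F w).1 = γ * w.1 := by
    intro w hw
    have h2 := heq hw
    have h3 : (F w).1 / w.1 = γ := by simpa [hh, Function.const] using h2
    field_simp [hw1ne w hw] at h3
    exact h3.trans (mul_comm _ _)
  refine ⟨γ, hγ1, ?_⟩
  intro w hw
  -- extend by the identity theorem along the slice z ↦ (z, w.2)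
  have hw2 : ‖w.2‖ < 1 := lt_of_le_of_lt (by rw [Prod.norm_def]; exact le_max_right _ _)
    (mem_ball_zero_iff.1 hw)
  set k : ℂ → ℂ := fun z => (F (z, w.2)).1 - γ * z with hk
  have hslice : ∀ z : ℂ, ‖z‖ < 1 → (z, w.2) ∈ B2 → True := fun _ _ _ => trivial
  have hmapsk : Set.MapsTo (fun z : ℂ => (z, w.2)) (Metric.ball 0 1) B2 := by
    intro z hz
    rw [mem_ball_zero_iff] at hz
    exact mem_B2.2 (max_lt hz hw2)
  have hkd : DifferentiableOn ℂ k (Metric.ball 0 1) := by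
    apply DifferentiableOn.sub
    · exact hd1.comp ((differentiable_id.prodMk (differentiable_const w.2)).differentiableOn) hmapsk
    · exact (differentiable_const γ |>.mul differentiable_id).differentiableOn
  have hka : AnalyticOnNhd ℂ k (Metric.ball 0 1) := hkd.analyticOnNhd Metric.isOpen_ball
  set t : ℝ := (‖w.2‖ + 1) / 2 with ht
  have ht1 : ‖w.2‖ < t := by rw [ht]; linarith
  have ht2 : t < 1 := by rw [ht]; linarith
  have ht0 : (0:ℝ) ≤ t := le_trans (norm_nonneg _) ht1.le
  have htmem : (t:ℂ) ∈ Metric.ball (0:ℂ) 1 := by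
    rw [mem_ball_zero_iff, Complex.norm_real, Real.norm_of_nonneg ht0]
    exact ht2
  have hOopen : IsOpen {z : ℂ | ‖w.2‖ < ‖z‖ ∧ ‖z‖ < 1} :=
    (isOpen_lt continuous_const continuous_norm).inter (isOpen_lt continuous_norm continuous_const)
  have htO : (t:ℂ) ∈ {z : ℂ | ‖w.2‖ < ‖z‖ ∧ ‖z‖ < 1} := by
    constructor <;> rw [Complex.norm_real, Real.norm_of_nonneg ht0] <;> assumption
  have hOzero : ∀ z ∈ {z : ℂ | ‖w.2‖ < ‖z‖ ∧ ‖z‖ < 1}, k z = 0 := by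
    intro z hz
    have : (z, w.2) ∈ Us := ⟨hz.1, hz.2⟩
    rw [hk]
    simp only
    rw [hUs _ this]
    ring
  have hev : k =ᶠ[nhds (t:ℂ)] 0 := by
    filter_upwards [hOopen.mem_nhds htO] with z hz using hOzero z hz
  have hzero : Set.EqOn k 0 (Metric.ball 0 1) :=
    hka.eqOn_zero_of_preconnected_of_eventuallyEq_zero
      (convex_ball (0:ℂ) 1).isPreconnected htmem hev
  have hw1 : w.1 ∈ Metric.ball (0:ℂ) 1 := by
    rw [mem_ball_zero_iff]
    exact lt_of_le_of_lt (by rw [Prod.norm_def]; exact le_max_left _ _) (mem_ball_zero_iff.1 hw)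
  have := hzero hw1
  rw [hk] at this
  simp only [Pi.zero_apply] at this
  have : (F (w.1, w.2)).1 = γ * w.1 := by linear_combination this
  simpa using this

private def sw : ℂ × ℂ → ℂ × ℂ := fun w => (w.2, w.1)

lemma sw_norm (w : ℂ × ℂ) : ‖sw w‖ = ‖w‖ := by
  simp [sw, Prod.norm_def, max_comm]

lemma sw_mem {w : ℂ × ℂ} (hw : w ∈ B2) : sw w ∈ B2 := by
  rwa [B2, mem_ball_zero_iff, sw_norm, ← mem_ball_zero_iff]

lemma sw_diff : Differentiable ℂ sw := differentiable_snd.prodMk differentiable_fst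

lemma sw_sw (w : ℂ × ℂ) : sw (sw w) = w := rfl

lemma bidisc_aut {F : ℂ × ℂ → ℂ × ℂ} (hd : DifferentiableOn ℂ F B2)
    (hn : ∀ w ∈ B2, ‖F w‖ = ‖w‖) :
    (∃ γ δ : ℂ, ‖γ‖ = 1 ∧ ‖δ‖ = 1 ∧ ∀ w ∈ B2, F w = (γ * w.1, δ * w.2)) ∨
    (∃ γ δ : ℂ, ‖γ‖ = 1 ∧ ‖δ‖ = 1 ∧ ∀ w ∈ B2, F w = (γ * w.2, δ * w.1)) := by
  have hz1 : ((2:ℂ)⁻¹, (0:ℂ)) ∈ B2 := mem_B2.2 (by norm_num)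
  have hz2 : ((0:ℂ), (2:ℂ)⁻¹) ∈ B2 := mem_B2.2 (by norm_num)
  have hn1 : max ‖(F ((2:ℂ)⁻¹, 0)).1‖ ‖(F ((2:ℂ)⁻¹, 0)).2‖ = 2⁻¹ := by
    rw [← Prod.norm_def, hn _ hz1]
    simp [Prod.norm_def]
  -- useful: differentiability/norm facts for swapped versions
  have hdsw : ∀ {G : ℂ × ℂ → ℂ × ℂ}, DifferentiableOn ℂ G B2 →
      DifferentiableOn ℂ (sw ∘ G) B2 := fun hG =>
    sw_diff.comp_differentiableOn hG
  have hdsw2 : ∀ {G : ℂ × ℂ → ℂ × ℂ}, DifferentiableOn ℂ G B2 →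
      DifferentiableOn ℂ (G ∘ sw) B2 := fun hG =>
    hG.comp sw_diff.differentiableOn (fun w hw => sw_mem hw)
  rcases max_choice ‖(F ((2:ℂ)⁻¹, 0)).1‖ ‖(F ((2:ℂ)⁻¹, 0)).2‖ with hcase | hcase
  · -- case A : F₁ attains the norm at (1/2, 0)
    left
    obtain ⟨γ, hγ1, hγ⟩ := coord_linear hd hn (by rw [← hcase, hn1])
    -- now F₂ : consider the point (0, 1/2)
    have h2 : ‖(F ((0:ℂ), (2:ℂ)⁻¹)).2‖ = 2⁻¹ := by
      have hmax : max ‖(F ((0:ℂ), (2:ℂ)⁻¹)).1‖ ‖(F ((0:ℂ), (2:ℂ)⁻¹)).2‖ = 2⁻¹ := by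
        rw [← Prod.norm_def, hn _ hz2]
        simp [Prod.norm_def]
      have h1 : (F ((0:ℂ), (2:ℂ)⁻¹)).1 = 0 := by
        have := hγ _ hz2
        simpa using this
      rw [h1] at hmax
      simpa using hmax
    obtain ⟨δ, hδ1, hδ⟩ := coord_linear (F := sw ∘ F ∘ sw) (hdsw2 (hdsw hd))
      (fun w hw => by
        show ‖sw (F (sw w))‖ = ‖w‖
        rw [sw_norm, hn _ (sw_mem hw), sw_norm])
      (by show ‖(sw (F (sw ((2:ℂ)⁻¹, 0)))).1‖ = 2⁻¹; exact h2)
    refine ⟨γ, δ, hγ1, hδ1, fun w hw => ?_⟩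
    have hδ' := hδ (sw w) (sw_mem hw)
    simp only [Function.comp_apply, sw_sw] at hδ'
    have : (F w).2 = δ * w.2 := hδ'
    exact Prod.ext (hγ w hw) this
  · -- case B : F₂ attains the norm at (1/2, 0)
    right
    obtain ⟨γ, hγ1, hγ⟩ := coord_linear (F := sw ∘ F) (hdsw hd)
      (fun w hw => by show ‖sw (F w)‖ = ‖w‖; rw [sw_norm, hn _ hw])
      (by show ‖(F ((2:ℂ)⁻¹, 0)).2‖ = 2⁻¹; rw [← hcase, hn1])
    -- hγ : (F w).2 = γ * w.1 on B2
    have h2 : ‖(F ((0:ℂ), (2:ℂ)⁻¹)).1‖ = 2⁻¹ := by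
      have hmax : max ‖(F ((0:ℂ), (2:ℂ)⁻¹)).1‖ ‖(F ((0:ℂ), (2:ℂ)⁻¹)).2‖ = 2⁻¹ := by
        rw [← Prod.norm_def, hn _ hz2]
        simp [Prod.norm_def]
      have h1 : (F ((0:ℂ), (2:ℂ)⁻¹)).2 = 0 := by
        have := hγ _ hz2
        simpa [sw] using this
      rw [h1] at hmax
      simpa using hmax
    obtain ⟨δ, hδ1, hδ⟩ := coord_linear (F := F ∘ sw) (hdsw2 hd)
      (fun w hw => by show ‖F (sw w)‖ = ‖w‖; rw [hn _ (sw_mem hw), sw_norm])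
      (by show ‖(F (sw ((2:ℂ)⁻¹, 0))).1‖ = 2⁻¹; exact h2)
    refine ⟨δ, γ, hδ1, hγ1, fun w hw => ?_⟩
    have hδ' := hδ (sw w) (sw_mem hw)
    simp only [Function.comp_apply, sw_sw] at hδ'
    have hγ' := hγ w hw
    exact Prod.ext (by simpa [sw] using hδ') (by simpa [sw] using hγ')


lemma posdef_bisym {a b : ℂ} : (!![a, b; b, a] : Mat2).PosDef ↔ 0 < a + b ∧ 0 < a - b := by
  rw [Matrix.posDef_iff_dotProduct_mulVec]
  constructor
  · rintro ⟨-, hq⟩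
    constructor
    · have h1 := @hq ![1, 1] (by
        intro h
        have := congrFun h 0
        simp at this)
      have : (star ![(1:ℂ), 1]) ⬝ᵥ ((!![a, b; b, a] : Mat2) *ᵥ ![1, 1]) = 2 * (a + b) := by
        simp [Matrix.mulVec, dotProduct, Fin.sum_univ_two]
        ring
      rw [this] at h1
      have h2 : (0:ℂ) < 2 := by norm_num
      calc (0:ℂ) = 2⁻¹ * 0 := by ring
        _ < 2⁻¹ * (2 * (a + b)) := by
            apply mul_lt_mul_of_pos_left h1
            rw [Complex.lt_def]; norm_num
        _ = a + b := by ring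
    · have h1 := @hq ![1, -1] (by
        intro h
        have := congrFun h 0
        simp at this)
      have : (star ![(1:ℂ), -1]) ⬝ᵥ ((!![a, b; b, a] : Mat2) *ᵥ ![1, -1]) = 2 * (a - b) := by
        simp [Matrix.mulVec, dotProduct, Fin.sum_univ_two]
        ring
      rw [this] at h1
      calc (0:ℂ) = 2⁻¹ * 0 := by ring
        _ < 2⁻¹ * (2 * (a - b)) := by
            apply mul_lt_mul_of_pos_left h1
            rw [Complex.lt_def]; norm_num
        _ = a - b := by ring
  · rintro ⟨h1, h2⟩
    have ha : a.im = 0 := by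
      have i1 := (Complex.lt_def.1 h1).2
      have i2 := (Complex.lt_def.1 h2).2
      simp at i1 i2
      linarith
    have hb : b.im = 0 := by
      have i1 := (Complex.lt_def.1 h1).2
      have i2 := (Complex.lt_def.1 h2).2
      simp at i1 i2
      linarith
    constructor
    · ext i j
      fin_cases i <;> fin_cases j <;>
        simp [Matrix.conjTranspose_apply, Complex.conj_eq_iff_im.2, ha, hb]
    · intro x hx
      have key : (star x) ⬝ᵥ ((!![a, b; b, a] : Mat2) *ᵥ x) =
          ((a + b) * ((x 0 + x 1) * star (x 0 + x 1))
            + (a - b) * ((x 0 - x 1) * star (x 0 - x 1))) / 2 := by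
        simp [Matrix.mulVec, dotProduct, Fin.sum_univ_two, star_add, star_sub]
        ring
      rw [key]
      have hre1 := (Complex.lt_def.1 h1).1
      have hre2 := (Complex.lt_def.1 h2).1
      simp at hre1 hre2
      have hxne : x 0 + x 1 ≠ 0 ∨ x 0 - x 1 ≠ 0 := by
        by_contra h
        push_neg at h
        obtain ⟨hp, hm⟩ := h
        have hx0 : x 0 = 0 := by linear_combination (hp + hm) / 2
        have hx1 : x 1 = 0 := by linear_combination (hp - hm) / 2
        apply hx
        funext i
        fin_cases i
        · exact hx0
        · exact hx1
      have hab : a + b = ((a.re + b.re : ℝ) : ℂ) := by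
        apply Complex.ext <;> simp [ha, hb]
      have hab' : a - b = ((a.re - b.re : ℝ) : ℂ) := by
        apply Complex.ext <;> simp [ha, hb]
      have hc1 : star (x 0 + x 1) = (starRingEnd ℂ) (x 0 + x 1) := rfl
      have hc2 : star (x 0 - x 1) = (starRingEnd ℂ) (x 0 - x 1) := rfl
      rw [hab, hab', hc1, hc2, Complex.mul_conj, Complex.mul_conj]
      have hcast : ((a.re + b.re : ℝ) : ℂ) * (Complex.normSq (x 0 + x 1) : ℂ)
          + ((a.re - b.re : ℝ) : ℂ) * (Complex.normSq (x 0 - x 1) : ℂ) =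
          (((a.re + b.re) * Complex.normSq (x 0 + x 1)
            + (a.re - b.re) * Complex.normSq (x 0 - x 1) : ℝ) : ℂ) := by
        push_cast
        ring
      rw [hcast]
      have h2c : ((2:ℂ)) = ((2:ℝ):ℂ) := by norm_num
      rw [h2c, ← Complex.ofReal_div]
      rw [Complex.zero_lt_real]
      have n1 : 0 ≤ Complex.normSq (x 0 + x 1) := Complex.normSq_nonneg _
      have n2 : 0 ≤ Complex.normSq (x 0 - x 1) := Complex.normSq_nonneg _
      rcases hxne with hne | hne
      · have : 0 < Complex.normSq (x 0 + x 1) := by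
          rcases lt_or_eq_of_le n1 with h | h
          · exact h
          · exact absurd (Complex.normSq_eq_zero.1 h.symm) hne
        nlinarith
      · have : 0 < Complex.normSq (x 0 - x 1) := by
          rcases lt_or_eq_of_le n2 with h | h
          · exact h
          · exact absurd (Complex.normSq_eq_zero.1 h.symm) hne
        nlinarith

lemma normSq_lt_one_iff (z : ℂ) : Complex.normSq z < 1 ↔ ‖z‖ < 1 := by
  rw [Complex.normSq_eq_norm_sq]
  constructor <;> intro h <;> nlinarith [norm_nonneg z]

lemma mem_EhatP_iff {p : ℂ × ℂ} :
    p ∈ EhatP ↔ ‖p.1 + p.2‖ < 1 ∧ ‖p.1 - p.2‖ < 1 := by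
  have hq : qC * mk2 p = mk2 p * qC := by
    ext i j
    fin_cases i <;> fin_cases j <;>
      simp [qC, mk2, Matrix.mul_apply, Fin.sum_univ_two]
  have hM : (1 : Mat2) - mk2 p * conjM (mk2 p) =
      !![1 - (p.1 * (starRingEnd ℂ) p.1 + p.2 * (starRingEnd ℂ) p.2),
         -(p.1 * (starRingEnd ℂ) p.2 + p.2 * (starRingEnd ℂ) p.1);
         -(p.1 * (starRingEnd ℂ) p.2 + p.2 * (starRingEnd ℂ) p.1),
         1 - (p.1 * (starRingEnd ℂ) p.1 + p.2 * (starRingEnd ℂ) p.2)] := by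
    ext i j
    fin_cases i <;> fin_cases j <;>
      simp [mk2, conjM, Matrix.mul_apply, Matrix.vecMul, Matrix.map_apply, dotProduct, Fin.sum_univ_two, Matrix.one_apply] <;> ring
  have e1 : 1 - (p.1 * (starRingEnd ℂ) p.1 + p.2 * (starRingEnd ℂ) p.2)
      + -(p.1 * (starRingEnd ℂ) p.2 + p.2 * (starRingEnd ℂ) p.1)
      = ((1 - Complex.normSq (p.1 + p.2) : ℝ) : ℂ) := by
    have h := Complex.mul_conj (p.1 + p.2)
    push_cast
    rw [← h]
    rw [map_add]
    ring
  have e2 : 1 - (p.1 * (starRingEnd ℂ) p.1 + p.2 * (starRingEnd ℂ) p.2)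
      - -(p.1 * (starRingEnd ℂ) p.2 + p.2 * (starRingEnd ℂ) p.1)
      = ((1 - Complex.normSq (p.1 - p.2) : ℝ) : ℂ) := by
    have h := Complex.mul_conj (p.1 - p.2)
    push_cast
    rw [← h]
    rw [map_sub]
    ring
  have key : p ∈ EhatP ↔
      ((0:ℂ) < ((1 - Complex.normSq (p.1 + p.2) : ℝ) : ℂ)
        ∧ (0:ℂ) < ((1 - Complex.normSq (p.1 - p.2) : ℝ) : ℂ)) := by
    rw [EhatP, Set.mem_setOf_eq, Ehat, Set.mem_setOf_eq]
    rw [hM]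
    rw [posdef_bisym, e1, e2]
    tauto
  rw [key, Complex.zero_lt_real, Complex.zero_lt_real, sub_pos, sub_pos,
    normSq_lt_one_iff, normSq_lt_one_iff]

private def phiL (p : ℂ × ℂ) : ℂ × ℂ := (p.1 + p.2, p.1 - p.2)
private def psiL (w : ℂ × ℂ) : ℂ × ℂ := ((w.1 + w.2) / 2, (w.1 - w.2) / 2)

lemma psiL_phiL (p : ℂ × ℂ) : psiL (phiL p) = p := by
  simp only [phiL, psiL]
  exact Prod.ext (by ring) (by ring)

lemma phiL_psiL (w : ℂ × ℂ) : phiL (psiL w) = w := by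
  simp only [phiL, psiL]
  exact Prod.ext (by ring) (by ring)

lemma phiL_diff : Differentiable ℂ phiL :=
  (differentiable_fst.add differentiable_snd).prodMk (differentiable_fst.sub differentiable_snd)

lemma psiL_diff : Differentiable ℂ psiL := by
  unfold psiL
  fun_prop

lemma mem_EhatP_iff_B2 {p : ℂ × ℂ} : p ∈ EhatP ↔ phiL p ∈ B2 := by
  rw [mem_EhatP_iff, mem_B2]
  simp only [phiL]
  exact (max_lt_iff).symm

lemma trans2 (a b c d : ℂ) : (!![a,b;c,d] : Mat2)ᵀ = !![a,c;b,d] := by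
  ext i j; fin_cases i <;> fin_cases j <;> simp

/-- every biholomorphic self-map of `Ê₂ ⊂ ℂ²` fixing `0` is of the
form `Z₀ ↦ ᵗU Z₀ U` with `U` unitary and `qU = ±Uq`. -/
theorem stmt_6 (f g : ℂ × ℂ → ℂ × ℂ)
    (hf : Set.MapsTo f EhatP EhatP) (hg : Set.MapsTo g EhatP EhatP)
    (hgf : ∀ p ∈ EhatP, g (f p) = p) (hfg : ∀ p ∈ EhatP, f (g p) = p)
    (hfd : DifferentiableOn ℂ f EhatP) (hgd : DifferentiableOn ℂ g EhatP)
    (h0 : f (0, 0) = (0, 0)) :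
    ∃ U : Mat2, Uᴴ * U = 1 ∧ (qC * U = U * qC ∨ qC * U = -(U * qC)) ∧
      ∀ p ∈ EhatP, f p = ((Uᵀ * mk2 p * U) 0 0, (Uᵀ * mk2 p * U) 0 1) := by
  classical
  set F : ℂ × ℂ → ℂ × ℂ := fun w => phiL (f (psiL w)) with hF
  set G : ℂ × ℂ → ℂ × ℂ := fun w => phiL (g (psiL w)) with hG
  have hpsiB : Set.MapsTo psiL B2 EhatP := fun w hw =>
    mem_EhatP_iff_B2.2 (by rw [phiL_psiL]; exact hw)
  have hFd : DifferentiableOn ℂ F B2 :=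
    phiL_diff.comp_differentiableOn (hfd.comp psiL_diff.differentiableOn hpsiB)
  have hGd : DifferentiableOn ℂ G B2 :=
    phiL_diff.comp_differentiableOn (hgd.comp psiL_diff.differentiableOn hpsiB)
  have hFm : Set.MapsTo F B2 B2 := fun w hw =>
    mem_EhatP_iff_B2.1 (hf (hpsiB hw))
  have hGm : Set.MapsTo G B2 B2 := fun w hw =>
    mem_EhatP_iff_B2.1 (hg (hpsiB hw))
  have hzero : psiL 0 = ((0:ℂ), (0:ℂ)) := by
    simp [psiL]
  have hF0 : F 0 = 0 := by
    rw [hF]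
    simp only [hzero, h0]
    simp [phiL]
  have hGF : ∀ w ∈ B2, G (F w) = w := by
    intro w hw
    rw [hF, hG]
    simp only
    rw [psiL_phiL, hgf _ (hpsiB hw), phiL_psiL]
  have h0B : (0 : ℂ × ℂ) ∈ B2 := by
    rw [B2]
    simp
  have hG0 : G 0 = 0 := by
    have := hGF 0 h0B
    rwa [hF0] at this
  have hn : ∀ w ∈ B2, ‖F w‖ = ‖w‖ := by
    intro w hw
    refine le_antisymm (schwarz2 hFd hFm hF0 hw) ?_
    calc ‖w‖ = ‖G (F w)‖ := by rw [hGF w hw]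
      _ ≤ ‖F w‖ := schwarz2 hGd hGm hG0 (hFm hw)
  have hfp : ∀ p, f p = psiL (F (phiL p)) := by
    intro p
    rw [hF]
    simp only
    rw [psiL_phiL p, psiL_phiL (f p)]
  rcases bidisc_aut hFd hn with ⟨γ, δ, hγ1, hδ1, hFeq⟩ | ⟨γ, δ, hγ1, hδ1, hFeq⟩
  · -- diagonal case
    obtain ⟨a, ha⟩ : ∃ a : ℂ, a ^ 2 = γ := IsAlgClosed.exists_pow_nat_eq γ zero_lt_two
    obtain ⟨b, hb⟩ : ∃ b : ℂ, b ^ 2 = δ := IsAlgClosed.exists_pow_nat_eq δ zero_lt_two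
    have hna : ‖a‖ = 1 := by
      have h2 : ‖a‖ ^ 2 = 1 := by rw [← norm_pow, ha, hγ1]
      nlinarith [norm_nonneg a]
    have hnb : ‖b‖ = 1 := by
      have h2 : ‖b‖ ^ 2 = 1 := by rw [← norm_pow, hb, hδ1]
      nlinarith [norm_nonneg b]
    have sa : (starRingEnd ℂ) a * a = 1 := by
      rw [mul_comm, Complex.mul_conj, Complex.normSq_eq_norm_sq, hna]
      norm_num
    have sb : (starRingEnd ℂ) b * b = 1 := by
      rw [mul_comm, Complex.mul_conj, Complex.normSq_eq_norm_sq, hnb]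
      norm_num
    refine ⟨!![(a+b)/2, (a-b)/2; (a-b)/2, (a+b)/2], ?_, Or.inl ?_, ?_⟩
    · ext i j
      fin_cases i <;> fin_cases j <;>
        simp [Matrix.conjTranspose_apply, Matrix.mul_apply, Fin.sum_univ_two,
          Matrix.one_apply, star_div₀, star_add, star_sub, map_ofNat] <;>
        first
          | linear_combination sa/2 + sb/2
          | linear_combination sa/2 - sb/2
          | linear_combination sb/2 - sa/2
    · ext i j
      fin_cases i <;> fin_cases j <;>
        simp [qC, Matrix.mul_apply, Fin.sum_univ_two]
    · intro p hp
      rw [hfp p, hFeq (phiL p) (mem_EhatP_iff_B2.1 hp), trans2]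
      refine Prod.ext ?_ ?_ <;>
        simp [psiL, phiL, mk2, Matrix.mul_apply, Fin.sum_univ_two] <;>
        first
          | linear_combination (-(p.1+p.2)/2) * ha + (-(p.1-p.2)/2) * hb
          | linear_combination (-(p.1+p.2)/2) * ha + ((p.1-p.2)/2) * hb
          | linear_combination ((p.1+p.2)/2) * ha + (-(p.1-p.2)/2) * hb
          | linear_combination ((p.1+p.2)/2) * ha + ((p.1-p.2)/2) * hb
  · -- antidiagonal case
    obtain ⟨a, ha⟩ : ∃ a : ℂ, a ^ 2 = γ := IsAlgClosed.exists_pow_nat_eq γ zero_lt_two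
    obtain ⟨b, hb⟩ : ∃ b : ℂ, b ^ 2 = δ := IsAlgClosed.exists_pow_nat_eq δ zero_lt_two
    have hna : ‖a‖ = 1 := by
      have h2 : ‖a‖ ^ 2 = 1 := by rw [← norm_pow, ha, hγ1]
      nlinarith [norm_nonneg a]
    have hnb : ‖b‖ = 1 := by
      have h2 : ‖b‖ ^ 2 = 1 := by rw [← norm_pow, hb, hδ1]
      nlinarith [norm_nonneg b]
    have sa : (starRingEnd ℂ) a * a = 1 := by
      rw [mul_comm, Complex.mul_conj, Complex.normSq_eq_norm_sq, hna]
      norm_num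
    have sb : (starRingEnd ℂ) b * b = 1 := by
      rw [mul_comm, Complex.mul_conj, Complex.normSq_eq_norm_sq, hnb]
      norm_num
    refine ⟨!![(a+b)/2, (a-b)/2; -((a-b)/2), -((a+b)/2)], ?_, Or.inr ?_, ?_⟩
    · ext i j
      fin_cases i <;> fin_cases j <;>
        simp [Matrix.conjTranspose_apply, Matrix.mul_apply, Fin.sum_univ_two,
          Matrix.one_apply, star_div₀, star_add, star_sub, map_ofNat] <;>
        first
          | linear_combination sa/2 + sb/2
          | linear_combination sa/2 - sb/2
          | linear_combination sb/2 - sa/2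
    · ext i j
      fin_cases i <;> fin_cases j <;>
        simp [qC, Matrix.mul_apply, Fin.sum_univ_two] <;> ring
    · intro p hp
      rw [hfp p, hFeq (phiL p) (mem_EhatP_iff_B2.1 hp), trans2]
      refine Prod.ext ?_ ?_ <;>
        simp [psiL, phiL, mk2, Matrix.mul_apply, Fin.sum_univ_two] <;>
        first
          | linear_combination (-(p.1-p.2)/2) * ha + (-(p.1+p.2)/2) * hb
          | linear_combination (-(p.1-p.2)/2) * ha + ((p.1+p.2)/2) * hb
          | linear_combination ((p.1-p.2)/2) * ha + (-(p.1+p.2)/2) * hb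
          | linear_combination ((p.1-p.2)/2) * ha + ((p.1+p.2)/2) * hb
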